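/- Let ξ ∈ ℂ^d with nonzero imaginary part in some coordinate, and let U(x) = Re(e^{i ξᵀ x}) for x ∈ ℝ^d. Let w(x) = (1+‖x‖²)^{−l} with l > 1/2. Then ∫_{ℝ^d} |U(x)|² w(x) dx = ∞. -/

import Mathlib

open MeasureTheory Real Filter
set_option maxHeartbeats 1000000

lemma norm_sq_eq (d : ℕ) (x : EuclideanSpace ℝ (Fin d)) : ‖x‖ ^ 2 = ∑ j, (x j) ^ 2 := by
  rw [EuclideanSpace.norm_eq, Real.sq_sqrt (by positivity)]
  simp [sq_abs]

lemma box_volume (d : ℕ) (c : Fin d → ℝ) :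
    volume {x : EuclideanSpace ℝ (Fin d) | ∀ j, x j ∈ Set.Icc (c j) (c j + 1)} = 1 := by
  have hmp := EuclideanSpace.volume_preserving_symm_measurableEquiv_toLp (Fin d)
  have hs : {x : EuclideanSpace ℝ (Fin d) | ∀ j, x j ∈ Set.Icc (c j) (c j + 1)}
      = (MeasurableEquiv.toLp 2 (Fin d → ℝ)).symm ⁻¹'
        (Set.univ.pi fun j => Set.Icc (c j) (c j + 1)) := by
    ext x
    simp [Set.mem_pi, Pi.le_def, forall_and, WithLp.equiv,
      Equiv.refl_apply]
  rw [hs, hmp.measure_preimage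
    (MeasurableSet.univ_pi fun j => measurableSet_Icc).nullMeasurableSet,
    volume_pi_pi]
  simp

lemma box_measurable (d : ℕ) (c : Fin d → ℝ) :
    MeasurableSet {x : EuclideanSpace ℝ (Fin d) | ∀ j, x j ∈ Set.Icc (c j) (c j + 1)} := by
  have : {x : EuclideanSpace ℝ (Fin d) | ∀ j, x j ∈ Set.Icc (c j) (c j + 1)}
      = ⋂ j, (fun x : EuclideanSpace ℝ (Fin d) => x j) ⁻¹' (Set.Icc (c j) (c j + 1)) := by
    ext x; simp
  rw [this]
  exact MeasurableSet.iInter fun j =>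
    (by fun_prop : Continuous fun x : EuclideanSpace ℝ (Fin d) => x j).measurable measurableSet_Icc

lemma aux_infinite (d : ℕ) (a : Fin d → ℝ) (j₀ : Fin d) (ha : a j₀ ≠ 0)
    (l C : ℝ) (hC : 0 < C) (hl : 0 ≤ l) :
    ∫⁻ x : EuclideanSpace ℝ (Fin d),
      ENNReal.ofReal (C * Real.exp (-2 * ∑ j, a j * x j) * (1 + ‖x‖ ^ 2) ^ (-l)) = ⊤ := by
  set J := ∫⁻ x : EuclideanSpace ℝ (Fin d),
      ENNReal.ofReal (C * Real.exp (-2 * ∑ j, a j * x j) * (1 + ‖x‖ ^ 2) ^ (-l)) with hJ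
  set α := |a j₀| with hα
  have hα0 : 0 < α := abs_pos.mpr ha
  set M : ℝ := 2 * ∑ j, |a j| with hM
  -- key: for every r there is t ≥ 0 with r ≤ C * exp (2*α*t - M) * (1 + d*(t+1)^2)^(-l)
  have key : ∀ r : ℝ, ∃ t : ℝ, 0 ≤ t ∧
      r ≤ C * Real.exp (2*α*t - M) * (1 + d*(t+1)^2) ^ (-l) := by
    intro r
    set K := C * Real.exp (-M) * Real.exp (-(2*α)) * ((1+(d:ℝ)) ^ (-l)) with hK
    have hK0 : 0 < K := by positivity
    have htend : Tendsto (fun s : ℝ => K * (Real.exp (2*α*s) / s ^ (2*l))) atTop atTop :=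
      (tendsto_exp_mul_div_rpow_atTop (2*l) (2*α) (by positivity)).const_mul_atTop hK0
    have htend2 : Tendsto (fun t : ℝ => K * (Real.exp (2*α*(t+1)) / (t+1) ^ (2*l)))
        atTop atTop := htend.comp (tendsto_atTop_add_const_right _ 1 tendsto_id)
    obtain ⟨t, ht0, htr⟩ := ((htend2.eventually_ge_atTop r).and
      (eventually_ge_atTop (0:ℝ))).exists
    refine ⟨t, htr, le_trans ht0 ?_⟩
    have ht1 : (0:ℝ) < t + 1 := by linarith
    -- rewrite LHS
    have e1 : ((t+1):ℝ) ^ (2*l) = ((t+1)^2 : ℝ) ^ l := by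
      rw [← Real.rpow_natCast (t+1) 2, ← Real.rpow_mul ht1.le]
      norm_num
    have e2 : K * (Real.exp (2*α*(t+1)) / (t+1) ^ (2*l))
        = C * Real.exp (2*α*t - M) * ((1+(d:ℝ)) * (t+1)^2) ^ (-l) := by
      rw [Real.mul_rpow (by positivity) (by positivity), e1, hK]
      rw [Real.rpow_neg (by positivity), Real.rpow_neg (by positivity), div_eq_mul_inv]
      have hexp : Real.exp (-M) * Real.exp (-(2*α)) * Real.exp (2*α*(t+1))
          = Real.exp (2*α*t - M) := by
        rw [← Real.exp_add, ← Real.exp_add]; ring_nf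
      linear_combination (C * (((1+(d:ℝ)) ^ l)⁻¹) * ((((t+1)^2) ^ l)⁻¹)) * hexp
    rw [e2]
    have hbase : (1:ℝ) + d*(t+1)^2 ≤ (1+(d:ℝ))*(t+1)^2 := by nlinarith [sq_nonneg t]
    exact mul_le_mul_of_nonneg_left
      (Real.rpow_le_rpow_of_nonpos (by positivity) hbase (by linarith)) (by positivity)
  have hr : ∀ r : ℝ, ENNReal.ofReal r ≤ J := by
    intro r
    obtain ⟨t, ht0, htr⟩ := key r
    set c : Fin d → ℝ := fun j => if j = j₀ then -(Real.sign (a j₀)) * t else 0 with hc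
    set B := {x : EuclideanSpace ℝ (Fin d) | ∀ j, x j ∈ Set.Icc (c j) (c j + 1)} with hB
    have hsg : a j₀ * Real.sign (a j₀) = α := by
      rcases ha.lt_or_gt with h|h
      · rw [Real.sign_of_neg h, hα, abs_of_neg h]; ring
      · rw [Real.sign_of_pos h, hα, abs_of_pos h]; ring
    have hsg1 : |Real.sign (a j₀)| = 1 := by
      rcases ha.lt_or_gt with h|h
      · rw [Real.sign_of_neg h]; norm_num
      · rw [Real.sign_of_pos h]; norm_num
    have hlow : ∀ x ∈ B,
        ENNReal.ofReal (C * Real.exp (2*α*t - M) * (1 + d*(t+1)^2) ^ (-l))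
        ≤ ENNReal.ofReal (C * Real.exp (-2 * ∑ j, a j * x j) * (1 + ‖x‖ ^ 2) ^ (-l)) := by
      intro x hx
      apply ENNReal.ofReal_le_ofReal
      have hsum : ∑ j, a j * x j ≤ -(α * t) + M / 2 := by
        have h1 : ∀ j, a j * x j ≤ a j * c j + |a j| := by
          intro j
          have h2 := (hx j).1; have h3 := (hx j).2
          rcases le_or_gt 0 (a j) with h|h
          · nlinarith [abs_of_nonneg h]
          · nlinarith [abs_of_neg h]
        have h4 : ∑ j, a j * c j = a j₀ * c j₀ := by
          apply Finset.sum_eq_single j₀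
          · intro b _ hb; simp [hc, hb]
          · intro h; exact absurd (Finset.mem_univ j₀) h
        have h5 : a j₀ * c j₀ = -(α * t) := by
          simp only [hc, if_pos rfl]
          nlinarith [hsg]
        calc ∑ j, a j * x j ≤ ∑ j, (a j * c j + |a j|) :=
              Finset.sum_le_sum fun j _ => h1 j
          _ = (∑ j, a j * c j) + ∑ j, |a j| := Finset.sum_add_distrib
          _ = -(α * t) + M / 2 := by rw [h4, h5, hM]; ring
      have hexp : Real.exp (2*α*t - M) ≤ Real.exp (-2 * ∑ j, a j * x j) :=
        Real.exp_le_exp.mpr (by linarith)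
      have hnx : ‖x‖^2 ≤ d*(t+1)^2 := by
        rw [norm_sq_eq]
        have hxj : ∀ j, (x j)^2 ≤ (t+1)^2 := by
          intro j
          have h2 := (hx j).1; have h3 := (hx j).2
          have hcb : |c j| ≤ t := by
            simp only [hc]
            split
            · rw [abs_mul, abs_neg, hsg1, abs_of_nonneg ht0]; simp
            · simpa using ht0
          have hcb1 := abs_le.mp hcb
          exact sq_le_sq' (by linarith) (by linarith)
        calc ∑ j, (x j)^2 ≤ ∑ _j : Fin d, (t+1)^2 :=
              Finset.sum_le_sum fun j _ => hxj j
          _ = d*(t+1)^2 := by simp [Finset.sum_const, mul_comm]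
      have hp : (1 + ‖x‖^2 : ℝ) ^ (-l) ≥ (1 + d*(t+1)^2 : ℝ) ^ (-l) :=
        Real.rpow_le_rpow_of_nonpos (by positivity) (by linarith) (by linarith)
      have h0 : (0:ℝ) ≤ Real.exp (2*α*t - M) := (Real.exp_pos _).le
      exact mul_le_mul (mul_le_mul_of_nonneg_left hexp hC.le) hp
        (Real.rpow_nonneg (by positivity) _) (by positivity)
    calc ENNReal.ofReal r
        ≤ ENNReal.ofReal (C * Real.exp (2*α*t - M) * (1 + d*(t+1)^2) ^ (-l)) :=
          ENNReal.ofReal_le_ofReal htr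
      _ = ∫⁻ _x in B, ENNReal.ofReal
            (C * Real.exp (2*α*t - M) * (1 + d*(t+1)^2) ^ (-l)) := by
          rw [setLIntegral_const, hB, box_volume, mul_one]
      _ ≤ ∫⁻ x in B, ENNReal.ofReal
            (C * Real.exp (-2 * ∑ j, a j * x j) * (1 + ‖x‖ ^ 2) ^ (-l)) :=
          setLIntegral_mono' (box_measurable d c) hlow
      _ ≤ J := lintegral_mono' Measure.restrict_le_self (le_refl _)
  by_contra hne
  have hJlt : J < ENNReal.ofReal (J.toReal + 1) := by
    rw [ENNReal.lt_ofReal_iff_toReal_lt hne]; linarith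
  exact lt_irrefl _ (lt_of_le_of_lt (hr _) hJlt)

theorem stmt_7 (d : ℕ) (ξ : Fin d → ℂ) (hξ : ∃ j, (ξ j).im ≠ 0)
    (l : ℝ) (hl : 1 / 2 < l)
    (U : EuclideanSpace ℝ (Fin d) → ℝ)
    (hU : ∀ x, U x = (Complex.exp (Complex.I * ∑ j, ξ j * (x j : ℂ))).re)
    (w : EuclideanSpace ℝ (Fin d) → ℝ)
    (hw : ∀ x, w x = (1 + ‖x‖ ^ 2) ^ (-l)) :
    ∫⁻ x, ENNReal.ofReal (U x ^ 2 * w x) = ⊤ := by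
  classical
  obtain ⟨j₀, hj₀⟩ := hξ
  have hl0 : (0:ℝ) ≤ l := by linarith
  set a : Fin d → ℝ := fun j => (ξ j).im with ha
  set b : Fin d → ℝ := fun j => (ξ j).re with hb
  set A : EuclideanSpace ℝ (Fin d) → ℝ := fun x => ∑ j, a j * x j with hA
  set Bf : EuclideanSpace ℝ (Fin d) → ℝ := fun x => ∑ j, b j * x j with hBf
  have hU' : ∀ x, U x = Real.exp (-(A x)) * Real.cos (Bf x) := by
    intro x
    rw [hU, Complex.exp_re]
    congr 1
    · congr 1
      simp [hA, ha, Complex.mul_re, Complex.mul_im, Complex.im_sum, Complex.re_sum]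
    · simp [hBf, hb, Complex.mul_re, Complex.mul_im, Complex.im_sum, Complex.re_sum]
  -- the shift h
  set S : ℝ := ∑ j, b j ^ 2 with hS
  set h : EuclideanSpace ℝ (Fin d) :=
    WithLp.toLp 2 (fun j => if S = 0 then 0 else (Real.pi/2) * b j / S : Fin d → ℝ) with hh
  have hAadd : ∀ x, A (x + h) = A x + A h := by
    intro x
    simp only [hA, PiLp.add_apply, mul_add, Finset.sum_add_distrib]
  have hBadd : ∀ x, Bf (x + h) = Bf x + Bf h := by
    intro x
    simp only [hBf, PiLp.add_apply, mul_add, Finset.sum_add_distrib]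
  have hcos : ∀ x, 1 ≤ Real.cos (Bf x) ^ 2 + Real.cos (Bf x + Bf h) ^ 2 := by
    intro x
    by_cases hS0 : S = 0
    · have hbz : ∀ j, b j = 0 := by
        intro j
        have h2 := (Finset.sum_eq_zero_iff_of_nonneg
          (fun i _ => sq_nonneg (b i))).mp (hS ▸ hS0) j (Finset.mem_univ j)
        exact pow_eq_zero_iff (n := 2) (by norm_num) |>.mp h2
      have hBx : Bf x = 0 := by simp [hBf, hbz]
      have hBh : Bf h = 0 := by simp [hBf, hbz]
      rw [hBx, hBh]
      norm_num
    · have hBh : Bf h = Real.pi / 2 := by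
        simp only [hBf, hh, if_neg hS0]
        have : ∀ j, b j * ((Real.pi/2) * b j / S) = (Real.pi/2/S) * b j ^ 2 := by
          intro j; field_simp
        rw [Finset.sum_congr rfl fun j _ => this j, ← Finset.mul_sum, ← hS]
        field_simp
      rw [hBh, Real.cos_add_pi_div_two]
      have := Real.sin_sq_add_cos_sq (Bf x)
      nlinarith
  -- constants
  set C₀ : ℝ := (2 + 2*‖h‖^2) ^ (-l) with hC₀
  have hC₀pos : 0 < C₀ := Real.rpow_pos_of_pos (by positivity) _
  set m : ℝ := min 1 (Real.exp (-(2 * A h))) with hm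
  have hmpos : 0 < m := lt_min one_pos (Real.exp_pos _)
  set c0 : ℝ := m * C₀ with hc0
  have hc0pos : 0 < c0 := mul_pos hmpos hC₀pos
  -- pointwise bound
  have hpoint : ∀ x, c0 * Real.exp (-2 * A x) * (1 + ‖x‖^2) ^ (-l)
      ≤ U x ^ 2 * w x + U (x + h) ^ 2 * w (x + h) := by
    intro x
    have hUx : U x ^ 2 = Real.exp (-2 * A x) * Real.cos (Bf x) ^ 2 := by
      rw [hU' x, mul_pow, pow_two (Real.exp (-(A x))), ← Real.exp_add,
        show -(A x) + -(A x) = -2 * A x from by ring]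
    have hUxh : U (x + h) ^ 2
        = Real.exp (-2 * A x) * Real.exp (-(2 * A h)) * Real.cos (Bf x + Bf h) ^ 2 := by
      rw [hU' (x + h), hAadd, hBadd, mul_pow, pow_two (Real.exp (-(A x + A h))),
        ← Real.exp_add, show -(A x + A h) + -(A x + A h) = -2 * A x + -(2 * A h) from by ring,
        Real.exp_add]
    set P : ℝ := (1 + ‖x‖^2) ^ (-l) with hP
    have hPpos : 0 < P := Real.rpow_pos_of_pos (by positivity) _
    have hwx : C₀ * P ≤ w x := by
      rw [hw x, hP, hC₀, ← Real.mul_rpow (by positivity) (by positivity)]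
      apply Real.rpow_le_rpow_of_nonpos (by positivity) ?_ (by linarith)
      nlinarith [norm_nonneg x, norm_nonneg h, sq_nonneg (‖x‖*‖h‖)]
    have hwxh : C₀ * P ≤ w (x + h) := by
      rw [hw (x + h), hP, hC₀, ← Real.mul_rpow (by positivity) (by positivity)]
      apply Real.rpow_le_rpow_of_nonpos (by positivity) ?_ (by linarith)
      have h1 : ‖x + h‖ ≤ ‖x‖ + ‖h‖ := norm_add_le x h
      nlinarith [norm_nonneg x, norm_nonneg h, norm_nonneg (x + h), sq_nonneg (‖x‖ - ‖h‖)]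
    rw [hUx, hUxh]
    set e : ℝ := Real.exp (-2 * A x) with he
    have hepos : 0 < e := Real.exp_pos _
    set eh : ℝ := Real.exp (-(2 * A h)) with heh
    have hehpos : 0 < eh := Real.exp_pos _
    have hm1 : m ≤ 1 := min_le_left _ _
    have hm2 : m ≤ eh := min_le_right _ _
    have hcc := hcos x
    have hc1 : (0:ℝ) ≤ Real.cos (Bf x) ^ 2 := sq_nonneg _
    have hc2 : (0:ℝ) ≤ Real.cos (Bf x + Bf h) ^ 2 := sq_nonneg _
    have hwx' : 0 ≤ w x := le_trans (by positivity) hwx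
    have hwxh' : 0 ≤ w (x + h) := le_trans (by positivity) hwxh
    calc c0 * e * P = e * (m * (C₀ * P)) := by rw [hc0]; ring
      _ ≤ e * (Real.cos (Bf x) ^ 2 * (C₀ * P) + m * Real.cos (Bf x + Bf h) ^ 2 * (C₀ * P)) := by
          apply mul_le_mul_of_nonneg_left ?_ hepos.le
          have key : m ≤ Real.cos (Bf x) ^ 2 + m * Real.cos (Bf x + Bf h) ^ 2 := by
            nlinarith [mul_le_mul_of_nonneg_left hcc hmpos.le,
              mul_le_mul_of_nonneg_right hm1 hc1]
          have key2 := mul_le_mul_of_nonneg_right key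
            (by positivity : (0:ℝ) ≤ C₀ * P)
          nlinarith [key2]
      _ ≤ e * (Real.cos (Bf x) ^ 2 * w x + eh * Real.cos (Bf x + Bf h) ^ 2 * w (x + h)) := by
          apply mul_le_mul_of_nonneg_left ?_ hepos.le
          have t1 : Real.cos (Bf x) ^ 2 * (C₀ * P) ≤ Real.cos (Bf x) ^ 2 * w x :=
            mul_le_mul_of_nonneg_left hwx hc1
          have t2 : m * Real.cos (Bf x + Bf h) ^ 2 * (C₀ * P)
              ≤ eh * Real.cos (Bf x + Bf h) ^ 2 * w (x + h) := by
            apply mul_le_mul (mul_le_mul hm2 le_rfl hc2 hehpos.le) hwxh (by positivity)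
              (by positivity)
          linarith
      _ = e * Real.cos (Bf x) ^ 2 * w x + e * eh * Real.cos (Bf x + Bf h) ^ 2 * w (x + h) := by
          ring
  -- measurability
  have hAc : Continuous A := by
    apply continuous_finset_sum
    intro j _
    exact continuous_const.mul (PiLp.continuous_apply (p := 2) (β := fun _ : Fin d => ℝ) j)
  have hBc : Continuous Bf := by
    apply continuous_finset_sum
    intro j _
    exact continuous_const.mul (PiLp.continuous_apply (p := 2) (β := fun _ : Fin d => ℝ) j)
  have hUc : Continuous U := by
    rw [show U = fun x => Real.exp (-(A x)) * Real.cos (Bf x) from funext hU']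
    exact (Real.continuous_exp.comp hAc.neg).mul (Real.continuous_cos.comp hBc)
  have hwc : Continuous w := by
    rw [show w = fun x => (1 + ‖x‖^2 : ℝ) ^ (-l) from funext hw]
    apply Continuous.rpow_const (continuous_const.add (continuous_norm.pow 2))
    intro x
    exact Or.inl (show (1 + ‖x‖^2 : ℝ) ≠ 0 by positivity)
  set F : EuclideanSpace ℝ (Fin d) → ENNReal := fun x => ENNReal.ofReal (U x ^ 2 * w x)
    with hF
  have hFmeas : Measurable F :=
    (ENNReal.measurable_ofReal).comp ((hUc.pow 2).mul hwc).measurable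
  have htrans : ∫⁻ x, F (x + h) = ∫⁻ x, F x := lintegral_add_right_eq_self F h
  have hinf : ∫⁻ x : EuclideanSpace ℝ (Fin d),
      ENNReal.ofReal (c0 * Real.exp (-2 * ∑ j, a j * x j) * (1 + ‖x‖ ^ 2) ^ (-l)) = ⊤ :=
    aux_infinite d a j₀ hj₀ l c0 hc0pos hl0
  have hbig : (⊤ : ENNReal) ≤ ∫⁻ x, (F x + F (x + h)) := by
    rw [← hinf]
    apply lintegral_mono
    intro x
    calc ENNReal.ofReal (c0 * Real.exp (-2 * ∑ j, a j * x j) * (1 + ‖x‖ ^ 2) ^ (-l))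
        ≤ ENNReal.ofReal (U x ^ 2 * w x + U (x + h) ^ 2 * w (x + h)) :=
          ENNReal.ofReal_le_ofReal (hpoint x)
      _ ≤ F x + F (x + h) := ENNReal.ofReal_add_le
  have hsplit : ∫⁻ x, (F x + F (x + h)) = (∫⁻ x, F x) + ∫⁻ x, F (x + h) :=
    lintegral_add_left hFmeas _
  rw [hsplit, htrans] at hbig
  have : (∫⁻ x, F x) + ∫⁻ x, F x = ⊤ := top_le_iff.mp hbig
  rcases ENNReal.add_eq_top.mp this with h1 | h1 <;> exact h1
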